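/- Let K ≥ 1 and T ≥ 1 be real numbers and δ > 0. Let w be an even positive integer with w ≥ (4/δ²)·(√(log(2K T²)) + √(log(2T)))², set b = √((w/2)·log(2K T²)) and c = 2·√(log(2T)/w). Then δ ≥ 2b/w + c and 2·exp(−w·c²/4) = 1/T. Consequently, if Z_1, …, Z_{w/2} are independent [0,1]-valued with common mean μ₁ and Z_{w/2+1}, …, Z_w are independent [0,1]-valued with common mean μ₂, all mutually independent, and |μ₂ − μ₁| ≥ δ, then ℙ(|S| > b) ≥ 1 − 1/T, where S = Σ_{ℓ=w/2+1}^{w} Z_ℓ − Σ_{ℓ=1}^{w/2} Z_ℓ. -/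

import Mathlib

open MeasureTheory ProbabilityTheory



set_option maxHeartbeats 1000000 in
private lemma le_of_sq_le_sq'' {a b : ℝ} (h : a ^ 2 ≤ b ^ 2) (hb : 0 ≤ b) : a ≤ b := by
  have h1 : Real.sqrt (a ^ 2) ≤ Real.sqrt (b ^ 2) := Real.sqrt_le_sqrt h
  rw [Real.sqrt_sq_eq_abs, Real.sqrt_sq hb] at h1
  exact (le_abs_self a).trans h1


set_option maxHeartbeats 1000000 in
private lemma mgf_le_of_abs_le_one {Ω : Type*} [MeasurableSpace Ω] (P : Measure Ω)
    [IsProbabilityMeasure P] (X : Ω → ℝ) (hX : Measurable X)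
    (hbdd : ∀ᵐ ω ∂P, |X ω| ≤ 1) (hmean : ∫ ω, X ω ∂P = 0) (t : ℝ) :
    mgf X P t ≤ Real.exp (t ^ 2 / 2) := by
  have hXint : Integrable X P := by
    refine Integrable.mono' (integrable_const 1) hX.aestronglyMeasurable ?_
    filter_upwards [hbdd] with ω h using by simpa using h
  have hptwise : ∀ᵐ ω ∂P, Real.exp (t * X ω) ≤ Real.cosh t + X ω * Real.sinh t := by
    filter_upwards [hbdd] with ω h
    have h1 : (0:ℝ) ≤ (1 + X ω) / 2 := by cases abs_le.1 h; linarith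
    have h2 : (0:ℝ) ≤ (1 - X ω) / 2 := by cases abs_le.1 h; linarith
    have h3 : (1 + X ω) / 2 + (1 - X ω) / 2 = 1 := by ring
    have := convexOn_exp.2 (Set.mem_univ t) (Set.mem_univ (-t)) h1 h2 h3
    simp only [smul_eq_mul] at this
    have heq : (1 + X ω) / 2 * t + (1 - X ω) / 2 * (-t) = t * X ω := by ring
    rw [heq] at this
    refine this.trans (le_of_eq ?_)
    rw [Real.cosh_eq, Real.sinh_eq]
    ring
  have hRint : Integrable (fun ω => Real.cosh t + X ω * Real.sinh t) P :=
    (integrable_const _).add (hXint.mul_const _)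
  have hEint : Integrable (fun ω => Real.exp (t * X ω)) P := by
    refine Integrable.mono' (integrable_const (Real.exp |t|))
      ((hX.const_mul t).exp).aestronglyMeasurable ?_
    filter_upwards [hbdd] with ω h
    rw [Real.norm_eq_abs, abs_of_pos (Real.exp_pos _)]
    refine Real.exp_le_exp.2 ?_
    calc t * X ω ≤ |t * X ω| := le_abs_self _
      _ = |t| * |X ω| := abs_mul _ _
      _ ≤ |t| * 1 := by gcongr
      _ = |t| := mul_one _
  calc mgf X P t ≤ ∫ ω, (Real.cosh t + X ω * Real.sinh t) ∂P :=
        integral_mono_ae hEint hRint hptwise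
    _ = Real.cosh t + (∫ ω, X ω ∂P) * Real.sinh t := by
        rw [integral_add (integrable_const _) (hXint.mul_const _), integral_const,
          integral_mul_const]
        simp
    _ = Real.cosh t := by rw [hmean]; ring
    _ ≤ Real.exp (t ^ 2 / 2) := Real.cosh_le_exp_half_sq t


set_option maxHeartbeats 1000000 in
private lemma hoeffding_tail_one {Ω : Type*} [MeasurableSpace Ω] (P : Measure Ω)
    [IsProbabilityMeasure P] (s : Finset ℕ) (hs : s.Nonempty) (V : ℕ → Ω → ℝ)
    (hmeas : ∀ ℓ ∈ s, Measurable (V ℓ))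
    (hbdd : ∀ ℓ ∈ s, ∀ᵐ ω ∂P, |V ℓ ω| ≤ 1)
    (hmean : ∀ ℓ ∈ s, ∫ ω, V ℓ ω ∂P = 0)
    (hindep : iIndepFun (fun ℓ : s => V (ℓ : ℕ)) P)
    (s₀ : ℝ) (hs₀ : 0 ≤ s₀) :
    (P {ω | s₀ ≤ ∑ ℓ ∈ s, V ℓ ω}).toReal ≤ Real.exp (-s₀ ^ 2 / (2 * s.card)) := by
  classical
  have hcard : (0:ℝ) < s.card := by exact_mod_cast Finset.card_pos.2 hs
  set n : ℝ := (s.card : ℝ) with hn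
  set t : ℝ := s₀ / n with ht
  have ht0 : 0 ≤ t := div_nonneg hs₀ hcard.le
  set W : Ω → ℝ := fun ω => ∑ ℓ ∈ s, V ℓ ω with hW
  have hWmeas : Measurable W := Finset.measurable_sum s hmeas
  have hWsum : W = ∑ i : s, (fun ω => V (i : ℕ) ω) := by
    funext ω
    rw [Finset.sum_apply]
    exact (Finset.sum_coe_sort s fun ℓ => V ℓ ω).symm
  have hVmeas : ∀ i : s, Measurable (fun ω => V (i : ℕ) ω) := fun i => hmeas i i.2
  have hmgf : mgf W P t ≤ Real.exp (n * (t ^ 2 / 2)) := by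
    rw [hWsum, hindep.mgf_sum hVmeas Finset.univ]
    calc ∏ i : s, mgf (fun ω => V (i : ℕ) ω) P t
        ≤ ∏ _i : s, Real.exp (t ^ 2 / 2) := by
          refine Finset.prod_le_prod (fun i _ => mgf_nonneg) (fun i _ => ?_)
          exact mgf_le_of_abs_le_one P _ (hVmeas i) (hbdd i i.2) (hmean i i.2) t
      _ = Real.exp (t ^ 2 / 2) ^ s.card := by
          rw [Finset.prod_const, Finset.card_univ, Fintype.card_coe]
      _ = Real.exp (n * (t ^ 2 / 2)) := by
          rw [← Real.exp_nat_mul]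
  have hWbdd : ∀ᵐ ω ∂P, |W ω| ≤ n := by
    have h := (ae_ball_iff s.countable_toSet).2 hbdd
    filter_upwards [h] with ω hω
    calc |W ω| ≤ ∑ ℓ ∈ s, |V ℓ ω| := Finset.abs_sum_le_sum_abs _ _
      _ ≤ ∑ _ℓ ∈ s, (1:ℝ) := Finset.sum_le_sum fun ℓ hℓ => hω ℓ hℓ
      _ = n := by simp [hn]
  have hEint : Integrable (fun ω => Real.exp (t * W ω)) P := by
    refine Integrable.mono' (integrable_const (Real.exp (|t| * n)))
      ((hWmeas.const_mul t).exp).aestronglyMeasurable ?_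
    filter_upwards [hWbdd] with ω h
    rw [Real.norm_eq_abs, abs_of_pos (Real.exp_pos _)]
    refine Real.exp_le_exp.2 ?_
    calc t * W ω ≤ |t * W ω| := le_abs_self _
      _ = |t| * |W ω| := abs_mul _ _
      _ ≤ |t| * n := by
          refine mul_le_mul_of_nonneg_left h (abs_nonneg _)
  calc (P {ω | s₀ ≤ W ω}).toReal
      ≤ Real.exp (-t * s₀) * mgf W P t := measure_ge_le_exp_mul_mgf s₀ ht0 hEint
    _ ≤ Real.exp (-t * s₀) * Real.exp (n * (t ^ 2 / 2)) := by
        refine mul_le_mul_of_nonneg_left hmgf (Real.exp_pos _).le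
    _ = Real.exp (-t * s₀ + n * (t ^ 2 / 2)) := (Real.exp_add _ _).symm
    _ = Real.exp (-s₀ ^ 2 / (2 * n)) := by
        congr 1
        rw [ht]
        field_simp
        ring


set_option maxHeartbeats 1000000 in
/-- Let `K ≥ 1`, `T ≥ 1` and `δ > 0` be reals, and let `w` be an
even positive integer with `w ≥ (4/δ²)·(√(log(2KT²)) + √(log(2T)))²`.  Set
`b = √((w/2)·log(2KT²))` and `c = 2·√(log(2T)/w)`.  Then `δ ≥ 2b/w + c` and
`2·exp(−w·c²/4) = 1/T`.  Consequently, if `Z 1, …, Z (w/2)` are independent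
`[0,1]`-valued with common mean `μ₁` and `Z (w/2+1), …, Z w` are independent
`[0,1]`-valued with common mean `μ₂`, all mutually independent, with
`|μ₂ − μ₁| ≥ δ`, then `P(|S| > b) ≥ 1 − 1/T` where
`S = Σ_{ℓ=w/2+1}^{w} Z ℓ − Σ_{ℓ=1}^{w/2} Z ℓ`. -/

theorem mucb_detection_with_tuned_parameters
    {Ω : Type*} [MeasurableSpace Ω] (P : Measure Ω) [IsProbabilityMeasure P]
    (K T δ : ℝ) (hK : 1 ≤ K) (hT : 1 ≤ T) (hδ : 0 < δ)
    (w : ℕ) (hw : 0 < w) (hweven : Even w)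
    (hwbig : (4 / δ ^ 2) *
      (Real.sqrt (Real.log (2 * K * T ^ 2)) + Real.sqrt (Real.log (2 * T))) ^ 2 ≤ (w : ℝ))
    (b c : ℝ)
    (hb : b = Real.sqrt (((w : ℝ) / 2) * Real.log (2 * K * T ^ 2)))
    (hc : c = 2 * Real.sqrt (Real.log (2 * T) / w))
    (Z : ℕ → Ω → ℝ) (μ₁ μ₂ : ℝ)
    (hmeas : ∀ ℓ ∈ Finset.Icc 1 w, Measurable (Z ℓ))
    (hbdd : ∀ ℓ ∈ Finset.Icc 1 w, ∀ᵐ ω ∂P, Z ℓ ω ∈ Set.Icc (0 : ℝ) 1)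
    (hmean₁ : ∀ ℓ ∈ Finset.Icc 1 (w / 2), ∫ ω, Z ℓ ω ∂P = μ₁)
    (hmean₂ : ∀ ℓ ∈ Finset.Icc (w / 2 + 1) w, ∫ ω, Z ℓ ω ∂P = μ₂)
    (hindep : iIndepFun
      (fun ℓ : Finset.Icc 1 w => Z (ℓ : ℕ)) P)
    (hgap : δ ≤ |μ₂ - μ₁|)
    (S : Ω → ℝ)
    (hS : S = fun ω =>
      (∑ ℓ ∈ Finset.Icc (w / 2 + 1) w, Z ℓ ω) - ∑ ℓ ∈ Finset.Icc 1 (w / 2), Z ℓ ω) :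
    2 * b / w + c ≤ δ ∧
    2 * Real.exp (-(w : ℝ) * c ^ 2 / 4) = 1 / T ∧
    ENNReal.ofReal (1 - 1 / T) ≤ P {ω | b < |S ω|} := by
  classical
  have hT0 : (0:ℝ) < T := lt_of_lt_of_le one_pos hT
  have h2T : (1:ℝ) < 2 * T := by linarith
  have hT2 : (1:ℝ) ≤ T ^ 2 := by
    rw [← one_pow 2]; exact pow_le_pow_left₀ one_pos.le hT 2
  have hKT2 : T ^ 2 ≤ K * T ^ 2 := le_mul_of_one_le_left (sq_nonneg T) hK
  have hKT2nn : (0:ℝ) ≤ K * T ^ 2 := le_trans (by linarith) hKT2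
  have h2KT : (1:ℝ) ≤ 2 * K * T ^ 2 := by linarith
  set L₁ := Real.log (2 * K * T ^ 2) with hL₁def
  set L₂ := Real.log (2 * T) with hL₂def
  set u := Real.log T with hudef
  have hL₁0 : 0 ≤ L₁ := Real.log_nonneg h2KT
  have hL₂0 : 0 ≤ L₂ := Real.log_nonneg h2T.le
  have hu0 : 0 ≤ u := Real.log_nonneg hT
  have huL₂ : u ≤ L₂ := Real.log_le_log hT0 (by linarith)
  have h2uL₁ : 2 * u ≤ L₁ := by
    have h1 : Real.log (T ^ 2) ≤ L₁ := Real.log_le_log (by positivity) (by linarith)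
    rw [Real.log_pow] at h1
    push_cast at h1
    linarith
  have hw0 : (0:ℝ) < w := by exact_mod_cast hw
  set p := Real.sqrt L₁ with hpdef
  set q := Real.sqrt L₂ with hqdef
  set r := Real.sqrt w with hrdef
  set v := Real.sqrt 2 with hvdef
  have hp2 : p ^ 2 = L₁ := Real.sq_sqrt hL₁0
  have hq2 : q ^ 2 = L₂ := Real.sq_sqrt hL₂0
  have hr2 : r ^ 2 = (w:ℝ) := Real.sq_sqrt hw0.le
  have hv2 : v ^ 2 = 2 := Real.sq_sqrt (by norm_num)
  have hp0 : 0 ≤ p := Real.sqrt_nonneg _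
  have hq0 : 0 ≤ q := Real.sqrt_nonneg _
  have hr0 : 0 < r := Real.sqrt_pos.2 hw0
  have hv0 : 0 < v := Real.sqrt_pos.2 (by norm_num)
  have hb0 : 0 ≤ b := hb ▸ Real.sqrt_nonneg _
  have hc0 : 0 ≤ c := hc ▸ (by positivity)
  have hb2 : b ^ 2 = (w:ℝ)/2 * L₁ := by rw [hb]; exact Real.sq_sqrt (by positivity)
  have hc2 : c ^ 2 = 4 * (L₂ / w) := by
    rw [hc, mul_pow, Real.sq_sqrt (by positivity)]; norm_num
  have key : 2 * (p + q) ≤ δ * r := by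
    refine le_of_sq_le_sq'' ?_ (by positivity)
    have hδ2 : (0:ℝ) < δ ^ 2 := by positivity
    rw [div_mul_eq_mul_div, div_le_iff₀ hδ2] at hwbig
    rw [← hr2] at hwbig
    linarith [hwbig]
  have hbv : b * v = r * p := by
    refine le_antisymm (le_of_sq_le_sq'' ?_ (by positivity))
      (le_of_sq_le_sq'' ?_ (by positivity)) <;>
    · apply le_of_eq; rw [mul_pow, mul_pow, hb2, hv2, hr2, hp2]; ring
  have hv1 : 1 ≤ v := by
    have h1 := Real.sqrt_le_sqrt (by norm_num : (1:ℝ) ≤ 2)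
    rwa [Real.sqrt_one] at h1
  have hv32 : v ≤ 3/2 := by
    have h1 : Real.sqrt 2 ≤ Real.sqrt ((3/2)^2) := Real.sqrt_le_sqrt (by norm_num)
    rwa [Real.sqrt_sq (by norm_num : (0:ℝ) ≤ 3/2)] at h1
  refine ⟨?_, ?_, ?_⟩
  · -- part 1
    have hbpr : b ≤ p * r := by
      have h1 : b * 1 ≤ b * v := mul_le_mul_of_nonneg_left hv1 hb0
      rw [mul_one, hbv] at h1
      linarith
    have hcq : c * r = 2 * q := by
      refine le_antisymm (le_of_sq_le_sq'' ?_ (by positivity))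
        (le_of_sq_le_sq'' ?_ (by positivity)) <;>
      · apply le_of_eq
        rw [mul_pow, mul_pow, hc2, hr2, hq2, mul_assoc, div_mul_cancel₀ _ (ne_of_gt hw0)]
        norm_num
    have hcr2 : c * r ^ 2 = 2 * q * r := by rw [pow_two, ← mul_assoc, hcq]
    have h1 : 2 * b + c * r ^ 2 ≤ δ * r ^ 2 := by
      have h2 := mul_le_mul_of_nonneg_right key hr0.le
      have h3 : r * r = r ^ 2 := by ring
      linarith [h2, hbpr, hcr2]
    rw [← hr2]
    rw [div_add' _ _ _ (by positivity), div_le_iff₀ (by positivity)]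
    linarith [h1]
  · -- part 2
    have hexpL₂ : Real.exp L₂ = 2 * T := Real.exp_log (by linarith)
    have harg : -(w:ℝ) * c ^ 2 / 4 = -L₂ := by
      rw [hc2]; field_simp
    rw [harg, Real.exp_neg, hexpL₂]
    field_simp
  · -- part 3
    -- half of w
    have hhw : 2 * (w / 2) = w := by obtain ⟨k, hk⟩ := hweven; omega
    have hhle : w / 2 ≤ w := Nat.div_le_self _ _
    have hcast : ((w / 2 : ℕ) : ℝ) = (w:ℝ) / 2 := by
      have h1 : ((2 * (w / 2) : ℕ) : ℝ) = ((w:ℕ) : ℝ) := by rw [hhw]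
      push_cast at h1
      linarith
    -- choose sign
    obtain ⟨σ, hσ1, hσcase⟩ : ∃ σ : ℝ, |σ| = 1 ∧ σ * (μ₂ - μ₁) ≤ -δ := by
      rcases le_abs.1 hgap with h' | h'
      · exact ⟨-1, by norm_num, by linarith⟩
      · exact ⟨1, by norm_num, by linarith⟩
    -- means
    set m : ℕ → ℝ := fun ℓ => ∫ ω, Z ℓ ω ∂P with hmdef
    set ε : ℕ → ℝ := fun ℓ => if ℓ ≤ w / 2 then -σ else σ with hεdef
    set V : ℕ → Ω → ℝ := fun ℓ ω => ε ℓ * (Z ℓ ω - m ℓ) with hVdef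
    have hε1 : ∀ ℓ, |ε ℓ| = 1 := by
      intro ℓ; rw [hεdef]; dsimp only; split <;> simp [hσ1]
    have hZint : ∀ ℓ ∈ Finset.Icc 1 w, Integrable (Z ℓ) P := by
      intro ℓ hℓ
      refine Integrable.mono' (integrable_const 1) (hmeas ℓ hℓ).aestronglyMeasurable ?_
      filter_upwards [hbdd ℓ hℓ] with ω hω
      rw [Real.norm_eq_abs, abs_le]
      exact ⟨by linarith [hω.1], hω.2⟩
    have hm01 : ∀ ℓ ∈ Finset.Icc 1 w, 0 ≤ m ℓ ∧ m ℓ ≤ 1 := by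
      intro ℓ hℓ
      constructor
      · refine integral_nonneg_of_ae ?_
        filter_upwards [hbdd ℓ hℓ] with ω hω using hω.1
      · calc m ℓ ≤ ∫ _ω, (1:ℝ) ∂P := by
              refine integral_mono_ae (hZint ℓ hℓ) (integrable_const 1) ?_
              filter_upwards [hbdd ℓ hℓ] with ω hω using hω.2
          _ = 1 := by simp
    have hVmeas : ∀ ℓ ∈ Finset.Icc 1 w, Measurable (V ℓ) := fun ℓ hℓ =>
      ((hmeas ℓ hℓ).sub measurable_const).const_mul _
    have hVbdd : ∀ ℓ ∈ Finset.Icc 1 w, ∀ᵐ ω ∂P, |V ℓ ω| ≤ 1 := by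
      intro ℓ hℓ
      filter_upwards [hbdd ℓ hℓ] with ω hω
      rw [hVdef]
      dsimp only
      rw [abs_mul, hε1, one_mul, abs_le]
      obtain ⟨hm0, hm1⟩ := hm01 ℓ hℓ
      exact ⟨by linarith [hω.1, hω.2], by linarith [hω.1, hω.2]⟩
    have hVmean : ∀ ℓ ∈ Finset.Icc 1 w, ∫ ω, V ℓ ω ∂P = 0 := by
      intro ℓ hℓ
      rw [hVdef]
      dsimp only
      rw [integral_const_mul, integral_sub (hZint ℓ hℓ) (integrable_const _),
        integral_const]
      simp [hmdef]
    have hVindep : iIndepFun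
        (fun ℓ : Finset.Icc 1 w => V (ℓ : ℕ)) P := by
      have := hindep.comp (fun ℓ : Finset.Icc 1 w => fun x : ℝ => ε ℓ * (x - m ℓ))
        (fun ℓ => (measurable_id.sub_const _).const_mul _)
      exact this
    -- threshold
    set s₀ : ℝ := (w:ℝ)/2 * δ - b with hs₀def
    have hβ0 : (0:ℝ) ≤ 1 - v/2 := by linarith
    have h2b : 2 * b = v * (r * p) := by
      calc 2 * b = v ^ 2 * b := by rw [hv2]
        _ = v * (b * v) := by ring
        _ = v * (r * p) := by rw [hbv]
    have hkey2 : (p + q) * r ≤ δ * (w:ℝ) / 2 := by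
      have h1 := mul_le_mul_of_nonneg_right key hr0.le
      have h2 : r * r = (w:ℝ) := by rw [← pow_two]; exact hr2
      have h3 : δ * (r * r) = δ * (w:ℝ) := by rw [h2]
      linarith [h1, h3]
    have hlow : r * ((1 - v/2) * p + q) ≤ s₀ := by
      have hvhalf : r * ((1 - v/2) * p) = r * p - b := by linear_combination h2b / 2
      have hexpand : r * ((1 - v/2) * p + q) = (r * p - b) + r * q := by
        rw [mul_add, hvhalf]
      rw [hexpand, hs₀def]
      linarith [hkey2]
    have hlow0 : 0 ≤ r * ((1 - v/2) * p + q) := by positivity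
    have hs₀0 : 0 ≤ s₀ := le_trans hlow0 hlow
    -- key quadratic inequality
    have hpq : v * u ≤ p * q := by
      refine le_of_sq_le_sq'' ?_ (mul_nonneg hp0 hq0)
      rw [mul_pow, mul_pow, hv2, hp2, hq2]
      have h1 := mul_le_mul h2uL₁ huL₂ hu0 (by linarith : (0:ℝ) ≤ L₁)
      linarith [h1]
    have hβsq : 2 * u ≤ ((1 - v/2) * p + q) ^ 2 := by
      have h32v : (0:ℝ) ≤ 3/2 - v := by linarith
      have e1 : ((1 - v/2) * p + q) ^ 2
          = (1 - v/2)^2 * p^2 + (2 - v) * (p * q) + q^2 := by ring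
      have e2 : (1 - v/2)^2 = 3/2 - v := by
        have e3 : (1 - v/2)^2 = 1 - v + v^2/4 := by ring
        rw [e3, hv2]; ring
      have h2up : 2 * u ≤ p ^ 2 := by rw [hp2]; exact h2uL₁
      have huq : u ≤ q ^ 2 := by rw [hq2]; exact huL₂
      have hA := mul_le_mul_of_nonneg_left h2up h32v
      have hB := mul_le_mul_of_nonneg_left hpq (by linarith : (0:ℝ) ≤ 2 - v)
      have hC : (2 - v) * (v * u) = 2 * (v * u) - 2 * u := by
        have e4 : (2 - v) * (v * u) = 2 * (v * u) - v^2 * u := by ring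
        rw [e4, hv2]
      rw [e1, e2]
      linarith [hA, hB, huq, hC]
    have hs₀sq : 2 * (w:ℝ) * u ≤ s₀ ^ 2 := by
      have h1 := mul_self_le_mul_self hlow0 hlow
      have h2 : (r * ((1 - v/2) * p + q)) ^ 2 = (w:ℝ) * ((1 - v/2) * p + q) ^ 2 := by
        rw [mul_pow, hr2]
      have h3 := mul_le_mul_of_nonneg_left hβsq hw0.le
      calc 2 * (w:ℝ) * u = (w:ℝ) * (2 * u) := by ring
        _ ≤ (w:ℝ) * ((1 - v/2) * p + q) ^ 2 := h3
        _ = (r * ((1 - v/2) * p + q)) ^ 2 := h2.symm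
        _ = (r * ((1 - v/2) * p + q)) * (r * ((1 - v/2) * p + q)) := by ring
        _ ≤ s₀ * s₀ := h1
        _ = s₀ ^ 2 := by ring
    -- the sum identity
    have hsum_eq : ∀ ω, ∑ ℓ ∈ Finset.Icc 1 w, V ℓ ω
        = σ * (S ω - (w:ℝ)/2 * (μ₂ - μ₁)) := by
      intro ω
      have e1 : Finset.Icc 1 w = Finset.Ioc 0 w := by
        ext x; simp only [Finset.mem_Icc, Finset.mem_Ioc]; omega
      have e2 : Finset.Icc 1 (w/2) = Finset.Ioc 0 (w/2) := by
        ext x; simp only [Finset.mem_Icc, Finset.mem_Ioc]; omega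
      have e3 : Finset.Icc (w/2+1) w = Finset.Ioc (w/2) w := by
        ext x; simp only [Finset.mem_Icc, Finset.mem_Ioc]; omega
      have hsplit : ∑ ℓ ∈ Finset.Icc 1 w, V ℓ ω
          = (∑ ℓ ∈ Finset.Icc 1 (w/2), V ℓ ω) + ∑ ℓ ∈ Finset.Icc (w/2+1) w, V ℓ ω := by
        rw [e1, e2, e3, Finset.sum_Ioc_consecutive _ (Nat.zero_le _) hhle]
      have hA : ∑ ℓ ∈ Finset.Icc 1 (w/2), V ℓ ω
          = -σ * ((∑ ℓ ∈ Finset.Icc 1 (w/2), Z ℓ ω) - (w:ℝ)/2 * μ₁) := by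
        have hcongr : ∀ ℓ ∈ Finset.Icc 1 (w/2), V ℓ ω = -σ * (Z ℓ ω - μ₁) := by
          intro ℓ hℓ
          have hle : ℓ ≤ w/2 := (Finset.mem_Icc.1 hℓ).2
          rw [hVdef]
          dsimp only
          rw [hεdef]
          dsimp only
          rw [if_pos hle, hmdef]
          dsimp only
          rw [hmean₁ ℓ hℓ]
        rw [Finset.sum_congr rfl hcongr, ← Finset.mul_sum, Finset.sum_sub_distrib,
          Finset.sum_const, Nat.card_Icc]
        simp only [nsmul_eq_mul]
        norm_num [hcast]
      have hB : ∑ ℓ ∈ Finset.Icc (w/2+1) w, V ℓ ω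
          = σ * ((∑ ℓ ∈ Finset.Icc (w/2+1) w, Z ℓ ω) - (w:ℝ)/2 * μ₂) := by
        have hcongr : ∀ ℓ ∈ Finset.Icc (w/2+1) w, V ℓ ω = σ * (Z ℓ ω - μ₂) := by
          intro ℓ hℓ
          have hgt : ¬ ℓ ≤ w/2 := by
            have := (Finset.mem_Icc.1 hℓ).1; omega
          rw [hVdef]
          dsimp only
          rw [hεdef]
          dsimp only
          rw [if_neg hgt, hmdef]
          dsimp only
          rw [hmean₂ ℓ hℓ]
        have hcard2 : ((Finset.Icc (w/2+1) w).card : ℝ) = (w:ℝ)/2 := by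
          rw [Nat.card_Icc]
          have : w + 1 - (w/2 + 1) = w - w/2 := by omega
          rw [this, Nat.cast_sub hhle, hcast]
          ring
        rw [Finset.sum_congr rfl hcongr, ← Finset.mul_sum, Finset.sum_sub_distrib,
          Finset.sum_const]
        simp only [nsmul_eq_mul]
        rw [hcard2]
      rw [hsplit, hA, hB, hS]
      ring
    -- inclusion
    have hincl : {ω | |S ω| ≤ b} ⊆ {ω | s₀ ≤ ∑ ℓ ∈ Finset.Icc 1 w, V ℓ ω} := by
      intro ω hω
      simp only [Set.mem_setOf_eq] at hω ⊢
      rw [hsum_eq ω]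
      have h1 : -b ≤ σ * S ω := by
        have h2 := neg_abs_le (σ * S ω)
        rw [abs_mul, hσ1, one_mul] at h2
        linarith
      have h3 : (w:ℝ)/2 * (σ * (μ₂ - μ₁)) ≤ (w:ℝ)/2 * (-δ) :=
        mul_le_mul_of_nonneg_left hσcase (by positivity)
      rw [hs₀def]
      linarith [h1, h3]
    -- apply the tail bound
    have hne : (Finset.Icc 1 w).Nonempty := ⟨1, by simp only [Finset.mem_Icc]; omega⟩
    have htail := hoeffding_tail_one P (Finset.Icc 1 w) hne V hVmeas hVbdd hVmean
      hVindep s₀ hs₀0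
    have hcardw : ((Finset.Icc 1 w).card : ℝ) = (w:ℝ) := by
      rw [Nat.card_Icc]; push_cast; ring
    rw [hcardw] at htail
    have hexp1T : Real.exp (-s₀ ^ 2 / (2 * (w:ℝ))) ≤ 1 / T := by
      have h1T : (1:ℝ)/T = Real.exp (-u) := by
        rw [Real.exp_neg, hudef, Real.exp_log hT0, one_div]
      rw [h1T]
      refine Real.exp_le_exp.2 ?_
      rw [neg_div, neg_le_neg_iff, le_div_iff₀ (by positivity)]
      linarith [hs₀sq]
    have hSmeas : Measurable S := by
      rw [hS]
      refine Measurable.sub ?_ ?_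
      · exact Finset.measurable_sum _ fun ℓ hℓ => hmeas ℓ (by
          simp only [Finset.mem_Icc] at hℓ ⊢; omega)
      · exact Finset.measurable_sum _ fun ℓ hℓ => hmeas ℓ (by
          simp only [Finset.mem_Icc] at hℓ ⊢; omega)
    have hfail : (P {ω | |S ω| ≤ b}).toReal ≤ 1 / T := by
      refine le_trans ?_ (htail.trans hexp1T)
      exact ENNReal.toReal_mono (measure_ne_top _ _) (measure_mono hincl)
    have hfail' : P {ω | |S ω| ≤ b} ≤ ENNReal.ofReal (1/T) := by
      rw [← ENNReal.ofReal_toReal (measure_ne_top P {ω | |S ω| ≤ b})]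
      exact ENNReal.ofReal_le_ofReal hfail
    have hcompl : {ω | b < |S ω|}ᶜ = {ω | |S ω| ≤ b} := by
      ext ω; simp [not_lt]
    have hmeasA : MeasurableSet {ω | b < |S ω|} :=
      measurableSet_lt measurable_const hSmeas.abs
    calc ENNReal.ofReal (1 - 1/T) = 1 - ENNReal.ofReal (1/T) := by
          rw [ENNReal.ofReal_sub _ (by positivity), ENNReal.ofReal_one]
      _ ≤ 1 - P {ω | |S ω| ≤ b} := tsub_le_tsub_left hfail' 1
      _ = 1 - P {ω | b < |S ω|}ᶜ := by rw [hcompl]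
      _ = P {ω | b < |S ω|} := by
          rw [prob_compl_eq_one_sub hmeasA, ENNReal.sub_sub_cancel ENNReal.one_ne_top
            prob_le_one]
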